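/- arXiv:2208.05464 — 4 statements merged into one kernel-verified Lean document; each statement's English description precedes it below -/
import Mathlib

section
/- Edmonds' characterisation: for a loopless matroid M with ground set E, the colouring number equals the maximum over all nonempty subsets X ⊆ E of positive rank of ⌈|X|/r(X)⌉. -/
open MeasureTheory Set Filter
open scoped ENNReal NNReal Matroid Topology

/-- The Gaussian (`q`-)binomial coefficient for real `q`. -/
noncomputable def gaussBinom (q : ℝ) (n d : ℕ) : ℝ :=
  ∏ j ∈ Finset.range d, (q ^ (n - j) - 1) / (q ^ (d - j) - 1)

/-- The points of the projective geometry `PG(n-1, q)` over a field `F` with `q` elements. -/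
abbrev PGPoint (F : Type) [Field F] (n : ℕ) := Projectivization F (Fin n → F)

instance pgFinite (F : Type) [Field F] [Fintype F] (n : ℕ) : Finite (PGPoint F n) :=
  Quotient.finite _

/-- The product Bernoulli measure modelling a random subset of `α` in which each element is
retained independently with probability `p`. -/
noncomputable def bernoulliMeasure (p : ℝ≥0∞) (hp : p ≤ 1) (α : Type) [Finite α] :
    Measure (α → Bool) :=
  letI : Fintype α := Fintype.ofFinite α
  Measure.pi fun _ => (PMF.bernoulli p.toNNReal (by simpa using ENNReal.toNNReal_mono ENNReal.one_ne_top hp)).toMeasure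

/-- A matroid is `k`-colourable if its ground set partitions into `k` independent sets. -/
def Matroid.Colorable {α : Type*} (M : Matroid α) (k : ℕ) : Prop :=
  ∃ f : α → ℕ, (∀ x ∈ M.E, f x < k) ∧ ∀ i, M.Indep {x ∈ M.E | f x = i}

/-- The colouring number of a matroid: the least `k` such that `M` is `k`-colourable. -/
noncomputable def Matroid.colNumber {α : Type*} (M : Matroid α) : ℕ :=
  sInf {k | M.Colorable k}

/-- The rank of a set in a matroid: the supremum of cardinalities of independent subsets. -/
noncomputable def Matroid.rankOf {α : Type*} (M : Matroid α) (X : Set α) : ℕ :=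
  sSup {k | ∃ I ⊆ X, M.Indep I ∧ I.ncard = k}

/-- `Es` is a `(b,c)`-decomposition of `M` relative to the colouring number bound `k`:
a partition of the ground set into nonempty classes of size at most `c * k`, every
transversal of which is `b`-colourable. -/
def Matroid.IsBCDecomposition {α : Type*} (M : Matroid α) (b : ℕ) (c : ℝ) (k : ℕ)
    {ℓ : ℕ} (Es : Fin ℓ → Set α) : Prop :=
  (∀ i, (Es i).Nonempty) ∧ (Set.univ.PairwiseDisjoint Es) ∧ (⋃ i, Es i) = M.E ∧
    (∀ i, (Es i).Finite ∧ ((Es i).ncard : ℝ) ≤ c * k) ∧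
    ∀ y : Fin ℓ → α, (∀ i, y i ∈ Es i) → (M ↾ Set.range y).Colorable b

/-- A matroid is `(b,c)`-decomposable if it admits a `(b,c)`-decomposition relative to its
colouring number. -/
def Matroid.BCDecomposable {α : Type*} (M : Matroid α) (b : ℕ) (c : ℝ) : Prop :=
  ∃ (ℓ : ℕ) (Es : Fin ℓ → Set α), M.IsBCDecomposition b c M.colNumber Es

/-- `M` is (a matroid isomorphic to) the projective geometry `PG(n-1,q)`: its ground set is all
of `PGPoint F n`, and a set of points is independent iff their representative vectors are
linearly independent. -/
def IsPGMatroid (F : Type) [Field F] (n : ℕ) (M : Matroid (PGPoint F n)) : Prop :=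
  M.E = Set.univ ∧
    ∀ S : Set (PGPoint F n),
      M.Indep S ↔ LinearIndependent F (fun x : S => Projectivization.rep x.val)


section EdmondsAux

open Set

namespace Matroid

variable {α : Type*} {M : Matroid α}

/-- An independent set inside the closure of an independent set is at most as large. -/
lemma encard_le_of_indep_subset_closure {J S : Set α} (hJ : M.Indep J) (hS : M.Indep S)
    (hJS : J ⊆ M.closure S) : J.encard ≤ S.encard := by
  obtain ⟨J', hJ', hJJ'⟩ := hJ.subset_isBasis_of_subset hJS (M.closure_subset_ground S)
  calc J.encard ≤ J'.encard := Set.encard_le_encard hJJ'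
    _ = S.encard := hJ'.encard_eq_encard hS.isBasis_closure

/-- `y` is in the closure of the set of elements of `I` it "needs". -/
lemma mem_closure_setOf_needed {I : Set α} (hI : M.Indep I) (hfin : I.Finite) {y : α}
    (hy : y ∈ M.closure I) : y ∈ M.closure {x ∈ I | y ∉ M.closure (I \ {x})} := by
  classical
  set T : Set ℕ := {n | ∃ S, S ⊆ I ∧ y ∈ M.closure S ∧ S.ncard = n} with hT
  have hne : T.Nonempty := ⟨I.ncard, I, Subset.rfl, hy, rfl⟩
  obtain ⟨S, hSI, hyS, hScard⟩ := Nat.sInf_mem hne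
  have hSfin : S.Finite := hfin.subset hSI
  have hmin : ∀ x ∈ S, y ∉ M.closure (I \ {x}) := by
    intro x hxS hyIx
    have hunion : M.Indep (S ∪ (I \ {x})) :=
      hI.subset (union_subset hSI diff_subset)
    have hinter : M.closure (S ∩ (I \ {x})) = M.closure S ∩ M.closure (I \ {x}) :=
      hunion.closure_inter_eq_inter_closure
    have hy2 : y ∈ M.closure (S \ {x}) := by
      have : S ∩ (I \ {x}) = S \ {x} := by
        ext z; simp only [mem_inter_iff, mem_diff, mem_singleton_iff]
        exact ⟨fun h => ⟨h.1, h.2.2⟩, fun h => ⟨h.1, hSI h.1, h.2⟩⟩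
      rw [this] at hinter
      rw [hinter]; exact ⟨hyS, hyIx⟩
    have hlt : (S \ {x}).ncard < S.ncard := by
      apply ncard_lt_ncard _ hSfin
      exact ⟨diff_subset, fun h => (h hxS).2 rfl⟩
    have := Nat.sInf_le (s := T) ⟨S \ {x}, diff_subset.trans hSI, hy2, rfl⟩
    omega
  refine (M.closure_subset_closure ?_) hyS
  intro x hx
  exact ⟨hSI hx, hmin x hx⟩

lemma exchange_augment {k : ℕ} : ∀ (t : ℕ) (I : Fin k → Set α) (v : ℕ → α),
    (∀ i, I i ⊆ M.E) → (∀ i, M.Indep (I i)) → (univ.PairwiseDisjoint I) →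
    (∀ i, v 0 ∉ I i) → (∀ s, s ≤ t → v s ∈ M.E) →
    (∀ s s', s < s' → s' ≤ t → v s ≠ v s') →
    (∀ s, s < t → ∃ l, v (s+1) ∈ I l ∧ v s ∉ I l ∧ v s ∉ M.closure (I l \ {v (s+1)})) →
    (∀ s, s < t → ∀ l, v s ∉ I l → v s ∈ M.closure (I l)) →
    (∀ s s', s + 2 ≤ s' → s' ≤ t → ∀ l, v s' ∈ I l → v s ∉ I l →
      v s ∈ M.closure (I l \ {v s'})) →
    (∃ j, v t ∉ I j ∧ v t ∉ M.closure (I j)) →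
    ∃ I' : Fin k → Set α, (∀ i, I' i ⊆ M.E) ∧ (∀ i, M.Indep (I' i)) ∧
      univ.PairwiseDisjoint I' ∧ (⋃ i, I' i) = (⋃ i, I i) ∪ {v 0} := by
  classical
  intro t
  induction t with
  | zero =>
    rintro I v hIE hind hdisj hv0 hvE _ _ _ _ ⟨j, hj1, hj2⟩
    refine ⟨Function.update I j (insert (v 0) (I j)), ?_, ?_, ?_, ?_⟩
    · intro i
      rcases eq_or_ne i j with rfl | hij
      · rw [Function.update_self]
        exact insert_subset (hvE 0 le_rfl) (hIE i)
      · rw [Function.update_of_ne hij]; exact hIE i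
    · intro i
      rcases eq_or_ne i j with rfl | hij
      · rw [Function.update_self]
        rw [(hind i).insert_indep_iff_of_notMem hj1]
        exact ⟨hvE 0 le_rfl, hj2⟩
      · rw [Function.update_of_ne hij]; exact hind i
    · intro a _ b _ hab
      have hd : Disjoint (I a) (I b) := hdisj (mem_univ a) (mem_univ b) hab
      simp only [Function.onFun]
      rcases eq_or_ne a j with rfl | haj
      · rw [Function.update_self, Function.update_of_ne hab.symm]
        rw [disjoint_left]
        rintro x (rfl | hx) hxb
        · exact hv0 b hxb
        · exact (disjoint_left.mp hd hx) hxb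
      · rw [Function.update_of_ne haj]
        rcases eq_or_ne b j with rfl | hbj
        · rw [Function.update_self, disjoint_left]
          rintro x hx (rfl | hxb)
          · exact hv0 a hx
          · exact (disjoint_left.mp hd hx) hxb
        · rw [Function.update_of_ne hbj]; exact hd
    · ext x
      simp only [mem_iUnion, mem_union, mem_singleton_iff]
      constructor
      · rintro ⟨i, hi⟩
        rcases eq_or_ne i j with rfl | hij
        · rw [Function.update_self] at hi
          rcases hi with rfl | hi
          · exact Or.inr rfl
          · exact Or.inl ⟨i, hi⟩
        · rw [Function.update_of_ne hij] at hi; exact Or.inl ⟨i, hi⟩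
      · rintro (⟨i, hi⟩ | rfl)
        · rcases eq_or_ne i j with rfl | hij
          · exact ⟨i, by rw [Function.update_self]; exact mem_insert_of_mem _ hi⟩
          · exact ⟨i, by rw [Function.update_of_ne hij]; exact hi⟩
        · exact ⟨j, by rw [Function.update_self]; exact mem_insert _ _⟩
  | succ t IH =>
    rintro I v hIE hind hdisj hv0 hvE hdist harc hns hnsh ⟨j, hj1, hj2⟩
    obtain ⟨l₀, hl1, hl2, hl3⟩ := harc t (Nat.lt_succ_self t)
    have hl0j : l₀ ≠ j := fun h => hj1 (h ▸ hl1)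
    set w : α := v (t+1) with hw
    have hwE : w ∈ M.E := hvE (t+1) le_rfl
    set J : Fin k → Set α := fun l => if l = j then insert w (I l) else I l \ {w} with hJ
    have hJE : ∀ l, J l ⊆ M.E := by
      intro l; simp only [hJ]
      split
      · exact insert_subset hwE (hIE l)
      · exact diff_subset.trans (hIE l)
    have hJj : J j = insert w (I j) := by simp [hJ]
    have hJne : ∀ l, l ≠ j → J l = I l \ {w} := by intro l hl; simp [hJ, hl]
    have hJind : ∀ l, M.Indep (J l) := by
      intro l
      rcases eq_or_ne l j with rfl | hlj
      · rw [hJj, (hind l).insert_indep_iff_of_notMem hj1]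
        exact ⟨hwE, hj2⟩
      · rw [hJne l hlj]; exact (hind l).subset diff_subset
    have hJdisj : univ.PairwiseDisjoint J := by
      intro a _ b _ hab
      have hd : Disjoint (I a) (I b) := hdisj (mem_univ a) (mem_univ b) hab
      simp only [Function.onFun]
      rw [disjoint_left]
      intro x hxa hxb
      rcases eq_or_ne a j with rfl | haj
      · rw [hJj] at hxa; rw [hJne b hab.symm] at hxb
        rcases hxa with rfl | hxa
        · exact hxb.2 rfl
        · exact (disjoint_left.mp hd hxa) hxb.1
      · rw [hJne a haj] at hxa
        rcases eq_or_ne b j with rfl | hbj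
        · rw [hJj] at hxb
          rcases hxb with rfl | hxb
          · exact hxa.2 rfl
          · exact (disjoint_left.mp hd hxa.1) hxb
        · rw [hJne b hbj] at hxb
          exact (disjoint_left.mp hd hxa.1) hxb.1
    have hJunion : (⋃ i, J i) = ⋃ i, I i := by
      ext x
      simp only [mem_iUnion]
      constructor
      · rintro ⟨i, hi⟩
        rcases eq_or_ne i j with rfl | hij
        · rw [hJj] at hi
          rcases hi with rfl | hi
          · exact ⟨l₀, hl1⟩
          · exact ⟨i, hi⟩
        · rw [hJne i hij] at hi; exact ⟨i, hi.1⟩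
      · rintro ⟨i, hi⟩
        rcases eq_or_ne x w with rfl | hxw
        · exact ⟨j, by rw [hJj]; exact mem_insert _ _⟩
        · rcases eq_or_ne i j with rfl | hij
          · exact ⟨i, by rw [hJj]; exact mem_insert_of_mem _ hi⟩
          · exact ⟨i, by rw [hJne i hij]; exact ⟨hi, hxw⟩⟩
    -- distinctness shortcuts
    have hdvw : ∀ s, s ≤ t → v s ≠ w :=
      fun s hs => hdist s (t+1) (Nat.lt_succ_of_le hs) le_rfl
    have hv0J : ∀ i, v 0 ∉ J i := by
      intro i
      rcases eq_or_ne i j with rfl | hij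
      · rw [hJj]
        rintro (h | h)
        · exact hdvw 0 (Nat.zero_le t) h
        · exact hv0 i h
      · rw [hJne i hij]; exact fun h => hv0 i h.1
    -- not-sink transfer
    have hns' : ∀ s, s < t → ∀ l, v s ∉ J l → v s ∈ M.closure (J l) := by
      intro s hs l hvsJ
      rcases eq_or_ne l j with rfl | hlj
      · rw [hJj] at hvsJ ⊢
        have : v s ∉ I l := fun h => hvsJ (mem_insert_of_mem _ h)
        exact M.closure_subset_closure (subset_insert _ _)
          (hns s (Nat.lt_succ_of_lt hs) l this)
      · rw [hJne l hlj] at hvsJ ⊢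
        have hvsI : v s ∉ I l := by
          intro h; exact hvsJ ⟨h, hdvw s (le_of_lt hs)⟩
        by_cases hwI : w ∈ I l
        · exact hnsh s (t+1) (by omega) le_rfl l hwI hvsI
        · rw [diff_singleton_eq_self hwI]
          exact hns s (Nat.lt_succ_of_lt hs) l hvsI
    -- no-shortcut transfer
    have hnsh' : ∀ s s', s + 2 ≤ s' → s' ≤ t → ∀ l, v s' ∈ J l → v s ∉ J l →
        v s ∈ M.closure (J l \ {v s'}) := by
      intro s s' hss' hs't l hvs' hvs
      rcases eq_or_ne l j with rfl | hlj
      · rw [hJj] at hvs' hvs ⊢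
        have hvs'I : v s' ∈ I l := by
          rcases hvs' with h | h
          · exact absurd h (hdvw s' hs't)
          · exact h
        have hvsI : v s ∉ I l := fun h => hvs (mem_insert_of_mem _ h)
        refine M.closure_subset_closure ?_
          (hnsh s s' hss' (Nat.le_succ_of_le hs't) l hvs'I hvsI)
        exact diff_subset_diff_left (subset_insert _ _)
      · rw [hJne l hlj] at hvs' hvs ⊢
        have hvsI : v s ∉ I l := by
          intro h; exact hvs ⟨h, hdvw s (by omega)⟩
        have h1 : v s ∈ M.closure (I l \ {v s'}) :=
          hnsh s s' hss' (Nat.le_succ_of_le hs't) l hvs'.1 hvsI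
        by_cases hwI : w ∈ I l
        · have h2 : v s ∈ M.closure (I l \ {w}) :=
            hnsh s (t+1) (by omega) le_rfl l hwI hvsI
          have hun : M.Indep ((I l \ {v s'}) ∪ (I l \ {w})) :=
            (hind l).subset (union_subset diff_subset diff_subset)
          have := hun.closure_inter_eq_inter_closure
          have hset : (I l \ {v s'}) ∩ (I l \ {w}) = (I l \ {w}) \ {v s'} := by
            ext z
            simp only [mem_inter_iff, mem_diff, mem_singleton_iff]
            tauto
          rw [hset] at this
          rw [this]
          exact ⟨h1, h2⟩
        · rw [diff_singleton_eq_self hwI]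
          exact h1
    -- arc transfer
    have harc' : ∀ s, s < t → ∃ l, v (s+1) ∈ J l ∧ v s ∉ J l ∧
        v s ∉ M.closure (J l \ {v (s+1)}) := by
      intro s hs
      obtain ⟨l, ha1, ha2, ha3⟩ := harc s (Nat.lt_succ_of_lt hs)
      refine ⟨l, ?_, ?_, ?_⟩
      · rcases eq_or_ne l j with rfl | hlj
        · rw [hJj]; exact mem_insert_of_mem _ ha1
        · rw [hJne l hlj]; exact ⟨ha1, hdvw (s+1) hs⟩
      · rcases eq_or_ne l j with rfl | hlj
        · rw [hJj]
          rintro (h | h)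
          · exact hdvw s (by omega) h
          · exact ha2 h
        · rw [hJne l hlj]; exact fun h => ha2 h.1
      · rcases eq_or_ne l j with rfl | hlj
        · rw [hJj]
          intro hcon
          have hwne : w ≠ v (s+1) := fun h => (hdvw (s+1) hs) h.symm
          have hins : insert w (I l) \ {v (s+1)} = insert w (I l \ {v (s+1)}) := by
            ext z
            simp only [mem_diff, mem_insert_iff, mem_singleton_iff]
            constructor
            · rintro ⟨h | h, hz⟩
              · exact Or.inl h
              · exact Or.inr ⟨h, hz⟩
            · rintro (rfl | ⟨h1, h2⟩)
              · exact ⟨Or.inl rfl, hwne⟩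
              · exact ⟨Or.inr h1, h2⟩
          rw [hins] at hcon
          have hvscl : v s ∈ M.closure (I l) := hns s (Nat.lt_succ_of_lt hs) l ha2
          have hex : v s ∈ M.closure (insert w (I l \ {v (s+1)})) \
              M.closure (I l \ {v (s+1)}) := ⟨hcon, ha3⟩
          have := M.closure_exchange hex
          have hsub : insert (v s) (I l \ {v (s+1)}) ⊆ M.closure (I l) := by
            refine insert_subset hvscl ?_
            exact diff_subset.trans (M.subset_closure (I l) (hIE l))
          have : w ∈ M.closure (I l) :=
            M.closure_subset_closure_of_subset_closure hsub this.1
          exact hj2 this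
        · rw [hJne l hlj]
          intro hcon
          refine ha3 (M.closure_subset_closure ?_ hcon)
          exact diff_subset_diff_left diff_subset
    -- new sink
    have hsink' : ∃ j', v t ∉ J j' ∧ v t ∉ M.closure (J j') := by
      refine ⟨l₀, ?_, ?_⟩
      · rw [hJne l₀ hl0j]; exact fun h => hl2 h.1
      · rw [hJne l₀ hl0j]; exact hl3
    obtain ⟨I', hI'E, hI'ind, hI'disj, hI'un⟩ :=
      IH J v hJE hJind hJdisj hv0J (fun s hs => hvE s (Nat.le_succ_of_le hs))
        (fun s s' h1 h2 => hdist s s' h1 (Nat.le_succ_of_le h2)) harc' hns' hnsh' hsink'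
    exact ⟨I', hI'E, hI'ind, hI'disj, by rw [hI'un, hJunion]⟩

lemma rankset_nonempty (X : Set α) :
    {k | ∃ I ⊆ X, M.Indep I ∧ I.ncard = k}.Nonempty :=
  ⟨0, ∅, empty_subset X, M.empty_indep, ncard_empty α⟩

lemma rankset_bddAbove {X : Set α} (hX : X.Finite) :
    BddAbove {k | ∃ I ⊆ X, M.Indep I ∧ I.ncard = k} := by
  refine ⟨X.ncard, ?_⟩
  rintro n ⟨I, hIX, _, rfl⟩
  exact ncard_le_ncard hIX hX

lemma le_rankOf {X I : Set α} (hX : X.Finite) (hIX : I ⊆ X) (hI : M.Indep I) :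
    I.ncard ≤ M.rankOf X :=
  le_csSup (rankset_bddAbove hX) ⟨I, hIX, hI, rfl⟩

lemma rankOf_le {X : Set α} {c : ℕ} (h : ∀ I ⊆ X, M.Indep I → I.ncard ≤ c) :
    M.rankOf X ≤ c :=
  csSup_le (rankset_nonempty X) (by rintro n ⟨I, hIX, hI, rfl⟩; exact h I hIX hI)

end Matroid

lemma ncard_iUnion_fin {α : Type*} {n : ℕ} (S : Fin n → Set α)
    (hfin : ∀ i, (S i).Finite) (hdisj : Set.univ.PairwiseDisjoint S) :
    (⋃ i, S i).ncard = ∑ i, (S i).ncard := by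
  classical
  have hU : (⋃ i, S i).Finite := finite_iUnion hfin
  rw [Set.ncard_eq_toFinset_card _ hU]
  have hset : hU.toFinset = Finset.univ.biUnion (fun i => (hfin i).toFinset) := by
    ext x; simp
  rw [hset, Finset.card_biUnion]
  · exact Finset.sum_congr rfl fun i _ => (Set.ncard_eq_toFinset_card _ (hfin i)).symm
  · intro a _ b _ hab
    have hd := hdisj (Set.mem_univ a) (Set.mem_univ b) hab
    rw [Function.onFun, Finset.disjoint_left]
    intro x hxa hxb
    simp only [Set.Finite.mem_toFinset] at hxa hxb
    exact (Set.disjoint_left.mp hd hxa) hxb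

lemma exists_rel_path {α : Type*} {r : α → α → Prop} {a b : α}
    (h : Relation.ReflTransGen r a b) :
    ∃ (n : ℕ) (v : ℕ → α), v 0 = a ∧ v n = b ∧ ∀ s, s < n → r (v s) (v (s+1)) := by
  induction h with
  | refl => exact ⟨0, fun _ => a, rfl, rfl, fun s hs => absurd hs (by omega)⟩
  | @tail b' c h1 h2 IH =>
    obtain ⟨n, v, h0, hn, hstep⟩ := IH
    refine ⟨n + 1, fun s => if s ≤ n then v s else c, by simp [h0], by simp, ?_⟩
    intro s hs
    rcases Nat.lt_or_ge s n with hsn | hsn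
    · simpa [Nat.le_of_lt hsn, Nat.succ_le_of_lt hsn] using hstep s hsn
    · have hsn' : s = n := by omega
      subst hsn'
      simpa [hn] using h2

namespace Matroid

variable {α : Type*} {M : Matroid α}

theorem colorable_of_forall_ncard_le (hfin : M.E.Finite) (k : ℕ)
    (h : ∀ X ⊆ M.E, X.Nonempty → X.ncard ≤ k * M.rankOf X) : M.Colorable k := by
  classical
  -- the set of achievable total sizes of disjoint independent families
  set P : (Fin k → Set α) → Prop := fun I =>
    (∀ i, I i ⊆ M.E) ∧ (∀ i, M.Indep (I i)) ∧ univ.PairwiseDisjoint I with hP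
  set V : Set ℕ := {n | ∃ I : Fin k → Set α, P I ∧ (⋃ i, I i).ncard = n} with hV
  have hVne : V.Nonempty := by
    refine ⟨(⋃ _ : Fin k, (∅ : Set α)).ncard, fun _ => ∅, ⟨?_, ?_, ?_⟩, rfl⟩
    · exact fun _ => empty_subset _
    · exact fun _ => M.empty_indep
    · intro a _ b _ _; simp [Function.onFun]
  have hVbdd : BddAbove V := by
    refine ⟨M.E.ncard, ?_⟩
    rintro n ⟨I, ⟨hIE, _, _⟩, rfl⟩
    exact ncard_le_ncard (iUnion_subset hIE) hfin
  obtain ⟨I, hPI, hIcard⟩ := Nat.sSup_mem hVne hVbdd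
  obtain ⟨hIE, hind, hdisj⟩ := hPI
  have hIfin : ∀ i, (I i).Finite := fun i => hfin.subset (hIE i)
  have hUfin : (⋃ i, I i).Finite := finite_iUnion hIfin
  by_cases hcover : (⋃ i, I i) = M.E
  · -- build the colouring
    refine ⟨fun x => if hx : ∃ i, x ∈ I i then (Classical.choose hx : Fin k).val else 0, ?_, ?_⟩
    · intro x hxE
      have hx : ∃ i, x ∈ I i := by
        rw [← hcover] at hxE; exact mem_iUnion.mp hxE
      simp only [dif_pos hx]
      exact (Classical.choose hx).isLt
    · intro i0
      by_cases hk : i0 < k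
      · refine Indep.subset (hind ⟨i0, hk⟩) ?_
        rintro x ⟨hxE, hfx⟩
        have hx : ∃ i, x ∈ I i := by
          rw [← hcover] at hxE; exact mem_iUnion.mp hxE
        simp only [dif_pos hx] at hfx
        have : Classical.choose hx = (⟨i0, hk⟩ : Fin k) := Fin.ext hfx
        rw [← this]
        exact Classical.choose_spec hx
      · have : {x ∈ M.E | (if hx : ∃ i, x ∈ I i then (Classical.choose hx : Fin k).val
            else 0) = i0} = ∅ := by
          ext x
          simp only [mem_setOf_eq, mem_empty_iff_false, iff_false, not_and]
          intro hxE
          have hx : ∃ i, x ∈ I i := by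
            rw [← hcover] at hxE; exact mem_iUnion.mp hxE
          rw [dif_pos hx]
          intro hc
          exact hk (hc ▸ (Classical.choose hx).isLt)
        rw [this]
        exact M.empty_indep
  · -- uncovered element exists
    obtain ⟨e₀, he₀E, he₀⟩ : ∃ e₀, e₀ ∈ M.E ∧ e₀ ∉ ⋃ i, I i := by
      by_contra hc
      push_neg at hc
      exact hcover (Subset.antisymm (iUnion_subset hIE) hc)
    set Arc : α → α → Prop := fun y x => ∃ l, x ∈ I l ∧ y ∉ I l ∧
      y ∈ M.closure (I l) ∧ y ∉ M.closure (I l \ {x}) with hArc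
    set Reach : Set α := {y | Relation.ReflTransGen Arc e₀ y} with hReach
    have hReachE : Reach ⊆ M.E := by
      intro y hy
      rcases (Relation.ReflTransGen.cases_tail hy) with rfl | ⟨c, _, hc2⟩
      · exact he₀E
      · obtain ⟨l, hl, _⟩ := hc2
        exact hIE l hl
    by_cases hsink : ∃ z ∈ Reach, ∃ j, z ∉ I j ∧ z ∉ M.closure (I j)
    · -- Case A : augment along a shortest path, contradicting maximality
      exfalso
      obtain ⟨z, hz, hzsink⟩ := hsink
      set T : Set ℕ := {n | ∃ v : ℕ → α, v 0 = e₀ ∧ (∀ s, s < n → Arc (v s) (v (s+1))) ∧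
        (∃ j, v n ∉ I j ∧ v n ∉ M.closure (I j))} with hT
      have hTne : T.Nonempty := by
        obtain ⟨n, v, h0, hn, hstep⟩ := exists_rel_path hz
        exact ⟨n, v, h0, hstep, hn ▸ hzsink⟩
      obtain ⟨v, hv0, hvarc, hvsink⟩ := Nat.sInf_mem hTne
      set t : ℕ := sInf T with ht
      have hvE : ∀ s, s ≤ t → v s ∈ M.E := by
        intro s hs
        match s with
        | 0 => rw [hv0]; exact he₀E
        | s + 1 =>
          obtain ⟨l, hl, _⟩ := hvarc s (by omega)
          exact hIE l hl
      have hnosink : ∀ s, s < t → ∀ j, v s ∉ I j → v s ∈ M.closure (I j) := by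
        intro s hs j hvs
        by_contra hc
        have : s ∈ T := ⟨v, hv0, fun s' hs' => hvarc s' (by omega), ⟨j, hvs, hc⟩⟩
        have := Nat.sInf_le this
        omega
      have hdist : ∀ a b, a < b → b ≤ t → v a ≠ v b := by
        intro a b hab hbt heq
        set d : ℕ := b - a with hd
        have hd1 : 1 ≤ d := by omega
        have hmem : t - d ∈ T := by
          refine ⟨fun s => if s ≤ a then v s else v (s + d), by simp [hv0], ?_, ?_⟩
          · intro s hs
            beta_reduce
            by_cases h1 : s + 1 ≤ a
            · rw [if_pos (by omega : s ≤ a), if_pos h1]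
              exact hvarc s (by omega)
            · by_cases h2 : s ≤ a
              · have hsa : s = a := by omega
                rw [if_pos h2, if_neg h1, hsa, heq, (by omega : a + 1 + d = b + 1)]
                exact hvarc b (by omega)
              · rw [if_neg h2, if_neg h1, (by omega : s + 1 + d = s + d + 1)]
                exact hvarc (s + d) (by omega)
          · beta_reduce
            by_cases h1 : t - d ≤ a
            · have hta : t - d = a := by omega
              have hbt' : b = t := by omega
              rw [if_pos h1, hta, heq, hbt']
              exact hvsink
            · rw [if_neg h1, (by omega : t - d + d = t)]
              exact hvsink
        have := Nat.sInf_le hmem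
        omega
      have hshort : ∀ a b, a + 2 ≤ b → b ≤ t → ∀ l, v b ∈ I l → v a ∉ I l →
          v a ∈ M.closure (I l \ {v b}) := by
        intro a b hab hbt l hvb hva
        by_contra hcon
        have harcab : Arc (v a) (v b) :=
          ⟨l, hvb, hva, hnosink a (by omega) l hva, hcon⟩
        set d : ℕ := b - a - 1 with hd
        have hd1 : 1 ≤ d := by omega
        have hmem : t - d ∈ T := by
          refine ⟨fun s => if s ≤ a then v s else v (s + d), by simp [hv0], ?_, ?_⟩
          · intro s hs
            beta_reduce
            by_cases h1 : s + 1 ≤ a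
            · rw [if_pos (by omega : s ≤ a), if_pos h1]
              exact hvarc s (by omega)
            · by_cases h2 : s ≤ a
              · have hsa : s = a := by omega
                rw [if_pos h2, if_neg h1, hsa, (by omega : a + 1 + d = b)]
                exact harcab
              · rw [if_neg h2, if_neg h1, (by omega : s + 1 + d = s + d + 1)]
                exact hvarc (s + d) (by omega)
          · beta_reduce
            have h1 : ¬ (t - d ≤ a) := by omega
            rw [if_neg h1, (by omega : t - d + d = t)]
            exact hvsink
        have := Nat.sInf_le hmem
        omega
      have harc2 : ∀ s, s < t → ∃ l, v (s+1) ∈ I l ∧ v s ∉ I l ∧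
          v s ∉ M.closure (I l \ {v (s+1)}) := by
        intro s hs
        obtain ⟨l, h1, h2, _, h4⟩ := hvarc s hs
        exact ⟨l, h1, h2, h4⟩
      have hv0' : ∀ i, v 0 ∉ I i := by
        rw [hv0]; intro i hi; exact he₀ (mem_iUnion.mpr ⟨i, hi⟩)
      obtain ⟨I', hI'E, hI'ind, hI'disj, hI'un⟩ :=
        Matroid.exchange_augment (M := M) t I v hIE hind hdisj hv0'
          hvE hdist harc2 hnosink hshort hvsink
      have hval : ((⋃ i, I' i).ncard) ∈ V := ⟨I', ⟨hI'E, hI'ind, hI'disj⟩, rfl⟩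
      have hle := le_csSup hVbdd hval
      rw [hI'un, hv0, union_singleton, ncard_insert_of_notMem he₀ hUfin, hIcard] at hle
      omega
    · -- Case B : no reachable sink; get a violating set X
      exfalso
      push_neg at hsink
      set X : Set α := Reach with hX
      have he₀X : e₀ ∈ X := Relation.ReflTransGen.refl
      have hXE : X ⊆ M.E := hReachE
      have hXfin : X.Finite := hfin.subset hXE
      have hspan : ∀ l, X ⊆ M.closure (I l ∩ X) := by
        intro l y hy
        by_cases hyl : y ∈ I l
        · have hmem : y ∈ I l ∩ X := ⟨hyl, hy⟩
          have h1 : ({y} : Set α) ⊆ I l ∩ X := singleton_subset_iff.mpr hmem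
          exact M.closure_subset_closure h1 (M.mem_closure_self y (hXE hy))
        · have hycl : y ∈ M.closure (I l) := hsink y hy l hyl
          have hneed := M.mem_closure_setOf_needed (hind l) (hIfin l) hycl
          refine M.closure_subset_closure ?_ hneed
          rintro x ⟨hxl, hxne⟩
          refine ⟨hxl, ?_⟩
          exact Relation.ReflTransGen.tail hy ⟨l, hxl, hyl, hycl, hxne⟩
      have hrank : ∀ l, M.rankOf X ≤ (I l ∩ X).ncard := by
        intro l
        refine rankOf_le ?_
        intro J hJX hJ
        have hJcl : J ⊆ M.closure (I l ∩ X) := hJX.trans (hspan l)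
        have hIlX : M.Indep (I l ∩ X) := (hind l).subset inter_subset_left
        have hfinJ : J.Finite := hXfin.subset hJX
        have hfinIX : (I l ∩ X).Finite := hXfin.subset inter_subset_right
        have hec := M.encard_le_of_indep_subset_closure hJ hIlX hJcl
        rw [Set.ncard_def, Set.ncard_def]
        exact ENat.toNat_le_toNat hec hfinIX.encard_lt_top.ne
      have hcount : 1 + ∑ l : Fin k, (I l ∩ X).ncard ≤ X.ncard := by
        have hsub : insert e₀ (⋃ l, I l ∩ X) ⊆ X := by
          refine insert_subset he₀X ?_
          exact iUnion_subset fun l => inter_subset_right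
        have hnotm : e₀ ∉ ⋃ l, I l ∩ X := by
          intro hc
          obtain ⟨l, hl, _⟩ := mem_iUnion.mp hc
          exact he₀ (mem_iUnion.mpr ⟨l, hl⟩)
        have hfinU2 : (⋃ l, I l ∩ X).Finite :=
          hXfin.subset (iUnion_subset fun l => inter_subset_right)
        have hcard : (insert e₀ (⋃ l, I l ∩ X)).ncard =
            1 + (⋃ l, I l ∩ X).ncard := by
          rw [ncard_insert_of_notMem hnotm hfinU2, add_comm]
        have hun : (⋃ l, I l ∩ X).ncard = ∑ l : Fin k, (I l ∩ X).ncard := by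
          refine ncard_iUnion_fin _ (fun l => hXfin.subset inter_subset_right) ?_
          intro a _ b _ hab
          exact Disjoint.mono inter_subset_left inter_subset_left
            (hdisj (mem_univ a) (mem_univ b) hab)
        calc 1 + ∑ l : Fin k, (I l ∩ X).ncard = (insert e₀ (⋃ l, I l ∩ X)).ncard := by
              rw [hcard, hun]
          _ ≤ X.ncard := ncard_le_ncard hsub hXfin
      have hsum : (k : ℕ) * M.rankOf X ≤ ∑ l : Fin k, (I l ∩ X).ncard := by
        calc (k : ℕ) * M.rankOf X = ∑ _l : Fin k, M.rankOf X := by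
              rw [Finset.sum_const, Finset.card_univ, Fintype.card_fin, smul_eq_mul]
          _ ≤ ∑ l : Fin k, (I l ∩ X).ncard := Finset.sum_le_sum fun l _ => hrank l
      have hXle := h X hXE ⟨e₀, he₀X⟩
      omega



lemma ncard_le_mul_rankOf_of_colorable (hfin : M.E.Finite) {k : ℕ} (hcol : M.Colorable k)
    {X : Set α} (hXE : X ⊆ M.E) : X.ncard ≤ k * M.rankOf X := by
  classical
  obtain ⟨f, hflt, hfind⟩ := hcol
  have hXfin : X.Finite := hfin.subset hXE
  set S : Fin k → Set α := fun i => {x ∈ X | f x = i} with hS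
  have hcover : X = ⋃ i, S i := by
    ext x
    simp only [mem_iUnion, hS, mem_setOf_eq]
    constructor
    · intro hx; exact ⟨⟨f x, hflt x (hXE hx)⟩, hx, rfl⟩
    · rintro ⟨i, hx, _⟩; exact hx
  have hdisjS : univ.PairwiseDisjoint S := by
    intro a _ b _ hab
    simp only [Function.onFun]
    rw [disjoint_left]
    rintro x ⟨_, hxa⟩ ⟨_, hxb⟩
    exact hab (Fin.ext (hxa ▸ hxb ▸ rfl))
  have hrk : ∀ i, (S i).ncard ≤ M.rankOf X := by
    intro i
    have hsub : S i ⊆ X := fun x hx => hx.1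
    have hind : M.Indep (S i) := by
      refine (hfind i).subset ?_
      rintro x ⟨hx, hfx⟩
      exact ⟨hXE hx, hfx⟩
    exact le_rankOf hXfin hsub hind
  calc X.ncard = ∑ i, (S i).ncard := by
        rw [hcover]
        exact ncard_iUnion_fin S (fun i => hXfin.subset fun x hx => hx.1) hdisjS
    _ ≤ ∑ _i : Fin k, M.rankOf X := Finset.sum_le_sum fun i _ => hrk i
    _ = k * M.rankOf X := by
        rw [Finset.sum_const, Finset.card_univ, Fintype.card_fin, smul_eq_mul]

end Matroid

end EdmondsAux

/-- Edmonds' characterisation: for a finite loopless matroid `M`, the colouring number equals the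
maximum of `⌈|X| / r(X)⌉` over all nonempty subsets `X` of the ground set of positive rank. -/
theorem edmonds_characterisation {α : Type*} (M : Matroid α) (hfin : M.E.Finite)
    (hloopless : ∀ x ∈ M.E, M.Indep {x}) :
    M.colNumber = sSup {m : ℕ | ∃ X ⊆ M.E, X.Nonempty ∧ 0 < M.rankOf X ∧
      m = ⌈(X.ncard : ℝ) / (M.rankOf X : ℝ)⌉₊} := by
  classical
  set S : Set ℕ := {m : ℕ | ∃ X ⊆ M.E, X.Nonempty ∧ 0 < M.rankOf X ∧
      m = ⌈(X.ncard : ℝ) / (M.rankOf X : ℝ)⌉₊} with hSdef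
  rcases eq_empty_or_nonempty M.E with hE | ⟨x, hxE⟩
  · have hcol0 : M.Colorable 0 := by
      refine ⟨fun _ => 0, by simp [hE], fun i => ?_⟩
      have : {x ∈ M.E | (fun _ : α => 0) x = i} = ∅ := by
        rw [hE]; simp
      rw [this]
      exact M.empty_indep
    have hL : M.colNumber = 0 := by
      rw [Matroid.colNumber]
      exact Nat.sInf_eq_zero.mpr (Or.inl hcol0)
    have hSempty : S = ∅ := by
      ext m
      simp only [hSdef, mem_setOf_eq, mem_empty_iff_false, iff_false, not_exists]
      rintro X ⟨hXE, ⟨y, hy⟩, _⟩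
      rw [hE] at hXE
      exact absurd (hXE hy) (notMem_empty y)
    rw [hL, hSempty, csSup_empty]
    rfl
  · have hrank1 : ∀ X, X ⊆ M.E → X.Nonempty → 1 ≤ M.rankOf X := by
      rintro X hXE ⟨y, hy⟩
      have h1 : ({y} : Set α).ncard = 1 := ncard_singleton y
      have := Matroid.le_rankOf (hfin.subset hXE) (singleton_subset_iff.mpr hy)
        (hloopless y (hXE hy))
      omega
    have hSbdd : BddAbove S := by
      refine ⟨M.E.ncard, ?_⟩
      rintro m ⟨X, hXE, hXne, hr, rfl⟩
      have hle1 : (1 : ℝ) ≤ (M.rankOf X : ℝ) := by exact_mod_cast hr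
      have : ⌈(X.ncard : ℝ) / (M.rankOf X : ℝ)⌉₊ ≤ X.ncard := by
        rw [Nat.ceil_le]
        exact (div_le_self (by positivity) hle1).trans (by norm_num)
      exact this.trans (ncard_le_ncard hXE hfin)
    have hSne : S.Nonempty := by
      have hr1 : M.rankOf {x} = 1 := by
        have hub : M.rankOf {x} ≤ 1 := by
          refine Matroid.rankOf_le ?_
          intro I hI _
          have := ncard_le_ncard hI (finite_singleton x)
          simpa using this
        have hlb := hrank1 {x} (singleton_subset_iff.mpr hxE) (singleton_nonempty x)
        omega
      refine ⟨1, {x}, singleton_subset_iff.mpr hxE, singleton_nonempty x, by omega, ?_⟩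
      rw [hr1, ncard_singleton]
      norm_num
    have hkey : ∀ X, X ⊆ M.E → X.Nonempty → X.ncard ≤ (sSup S) * M.rankOf X := by
      intro X hXE hXne
      have hr := hrank1 X hXE hXne
      have hrpos : (0 : ℝ) < (M.rankOf X : ℝ) := by exact_mod_cast by omega
      set m : ℕ := ⌈(X.ncard : ℝ) / (M.rankOf X : ℝ)⌉₊ with hm
      have hmS : m ∈ S := ⟨X, hXE, hXne, by omega, rfl⟩
      have hmle : m ≤ sSup S := le_csSup hSbdd hmS
      have h1 : (X.ncard : ℝ) ≤ (m : ℝ) * (M.rankOf X : ℝ) := by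
        have h2 := Nat.le_ceil ((X.ncard : ℝ) / (M.rankOf X : ℝ))
        rw [div_le_iff₀ hrpos] at h2
        exact h2
      have h3 : X.ncard ≤ m * M.rankOf X := by exact_mod_cast h1
      calc X.ncard ≤ m * M.rankOf X := h3
        _ ≤ (sSup S) * M.rankOf X := Nat.mul_le_mul_right _ hmle
    have hcol : M.Colorable (sSup S) :=
      M.colorable_of_forall_ncard_le hfin (sSup S) hkey
    have hmemS : sSup S ∈ {k | M.Colorable k} := hcol
    have hle : M.colNumber ≤ sSup S := by
      rw [Matroid.colNumber]; exact Nat.sInf_le hmemS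
    have hne2 : {k | M.Colorable k}.Nonempty := ⟨sSup S, hmemS⟩
    have hcolmem : M.Colorable M.colNumber := by
      rw [Matroid.colNumber]; exact Nat.sInf_mem hne2
    have hge : sSup S ≤ M.colNumber := by
      refine csSup_le hSne ?_
      rintro m ⟨X, hXE, hXne, hr, rfl⟩
      have hXle := Matroid.ncard_le_mul_rankOf_of_colorable hfin hcolmem hXE
      have hrpos : (0 : ℝ) < (M.rankOf X : ℝ) := by exact_mod_cast hr
      rw [Nat.ceil_le, div_le_iff₀ hrpos]
      exact_mod_cast hXle
    omega
end

section
/- Let q ≥ 2 be a prime power and p ∈ (0,1]. Fix an integer d ≥ 1 (possibly growing like ⌈log log n⌉). Call a rank-d flat F of PG(n-1, q) dense (with respect to the random subset E_p) if |E_p ∩ F| ≥ (1/2)·p·(q^d - 1)/(q - 1) and r(E_p ∩ F) = d. Then the probability that a fixed rank-d flat fails to be dense is at most exp(-(1/8)·p·(q^d-1)/(q-1)) + q^d·(1-p)^{q^{d-1}}. -/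
open MeasureTheory Set Filter
open scoped ENNReal NNReal Matroid Topology

section Aux
open Projectivization Module Real
-- counting lemma: scaling-invariant predicates
lemma proj_count {F V : Type*} [Field F] [Fintype F] [AddCommGroup V] [Module F V]
    (P : V → Prop) (h0 : ¬ P 0) (hsc : ∀ (a : Fˣ) (v : V), P (a • v) ↔ P v) :
    Nat.card {x : Projectivization F V // P x.rep} * (Fintype.card F - 1)
      = Nat.card {v : V // P v} := by
  have hbij : Function.Bijective
      (fun z : {x : Projectivization F V // P x.rep} × Fˣ =>
        (⟨z.2 • z.1.1.rep, (hsc z.2 _).2 z.1.2⟩ : {v : V // P v})) := by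
    constructor
    · rintro ⟨⟨x, hx⟩, u⟩ ⟨⟨y, hy⟩, w⟩ h
      simp only [Subtype.mk.injEq] at h
      have hx0 := x.rep_nonzero
      have hy0 := y.rep_nonzero
      have hxy : x = y := by
        conv_lhs => rw [← x.mk_rep]
        conv_rhs => rw [← y.mk_rep]
        rw [mk_eq_mk_iff]
        exact ⟨u⁻¹ * w, by rw [mul_smul, ← h, inv_smul_smul]⟩
      subst hxy
      have huw : u = w := by
        have := h
        rw [Units.smul_def, Units.smul_def] at this
        have h2 : ((u : F) - w) • x.rep = 0 := by rw [sub_smul, this, sub_self]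
        rcases smul_eq_zero.1 h2 with h3 | h3
        · exact Units.ext (sub_eq_zero.1 h3)
        · exact absurd h3 hx0
      simp [huw]
    · rintro ⟨v, hv⟩
      have hv0 : v ≠ 0 := fun h => h0 (h ▸ hv)
      obtain ⟨a, ha⟩ := exists_smul_eq_mk_rep F v hv0
      refine ⟨⟨⟨mk F v hv0, ?_⟩, a⁻¹⟩, ?_⟩
      · rw [← ha]; exact (hsc a v).2 hv
      · simp only [Subtype.mk.injEq]
        rw [← ha, inv_smul_smul]
  calc Nat.card {x : Projectivization F V // P x.rep} * (Fintype.card F - 1)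
      = Nat.card ({x : Projectivization F V // P x.rep} × Fˣ) := by
        haveI := Classical.decEq F
        rw [Nat.card_prod, Nat.card_eq_fintype_card (α := Fˣ), Fintype.card_units]
    _ = Nat.card {v : V // P v} := Nat.card_eq_of_bijective _ hbij

section CardAux

variable {F V : Type*} [Field F] [Fintype F] [AddCommGroup V] [Module F V] [Fintype V]

lemma card_nonzero_in (W : Submodule F V) :
    Nat.card {v : V // v ∈ W ∧ v ≠ 0}
      = Fintype.card F ^ Module.finrank F W - 1 := by
  classical
  have e : {w : W // w ≠ 0} ≃ {v : V // v ∈ W ∧ v ≠ 0} :=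
    { toFun := fun w => ⟨w.1, w.1.2, fun h => w.2 (Subtype.ext h)⟩
      invFun := fun v => ⟨⟨v.1, v.2.1⟩, fun h => v.2.2 (congrArg Subtype.val h)⟩
      left_inv := fun w => rfl
      right_inv := fun v => rfl }
  rw [← Nat.card_congr e, Nat.card_eq_fintype_card]
  have : Fintype.card {w : W // w ≠ 0} = Fintype.card W - Fintype.card {w : W // w = 0} :=
    Fintype.card_subtype_compl _
  rw [this, Fintype.card_subtype_eq (0 : W), card_eq_pow_finrank (K := F) (V := W)]

lemma card_dual_ne_zero (W : Submodule F V) (φ : Module.Dual F W) (hφ : φ ≠ 0) :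
    Nat.card {v : V // ∃ h : v ∈ W, φ ⟨v, h⟩ ≠ 0}
      = Fintype.card F ^ Module.finrank F W - Fintype.card F ^ (Module.finrank F W - 1) := by
  classical
  have e : {w : W // φ w ≠ 0} ≃ {v : V // ∃ h : v ∈ W, φ ⟨v, h⟩ ≠ 0} :=
    { toFun := fun w => ⟨w.1, w.1.2, w.2⟩
      invFun := fun v => ⟨⟨v.1, v.2.choose⟩, v.2.choose_spec⟩
      left_inv := fun w => rfl
      right_inv := fun v => rfl }
  rw [← Nat.card_congr e, Nat.card_eq_fintype_card]
  have h1 : Fintype.card {w : W // φ w ≠ 0}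
      = Fintype.card W - Fintype.card {w : W // φ w = 0} := Fintype.card_subtype_compl _
  have e2 : {w : W // φ w = 0} ≃ LinearMap.ker φ :=
    Equiv.subtypeEquivRight (fun w => (LinearMap.mem_ker (f := φ)).symm)
  have hrange : Module.finrank F (LinearMap.range φ) = 1 := by
    have hle : Module.finrank F (LinearMap.range φ) ≤ 1 := by
      simpa using (LinearMap.range φ).finrank_le
    have hne : LinearMap.range φ ≠ ⊥ := by
      rw [Ne, LinearMap.range_eq_bot]; exact hφ
    have hpos : 0 < Module.finrank F (LinearMap.range φ) := by
      rcases Nat.eq_zero_or_pos (Module.finrank F (LinearMap.range φ)) with h | h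
      · exact absurd (Submodule.finrank_eq_zero.1 h) hne
      · exact h
    omega
  have hker : Module.finrank F (LinearMap.ker φ) = Module.finrank F W - 1 := by
    have := LinearMap.finrank_range_add_finrank_ker φ
    omega
  rw [h1, Fintype.card_congr e2, card_eq_pow_finrank (K := F) (V := W),
    card_eq_pow_finrank (K := F) (V := LinearMap.ker φ), hker]

end CardAux

lemma bernoulliMeasure_eq_pi (p : ℝ≥0∞) (hp : p ≤ 1) (α : Type) [inst : Fintype α] :
    bernoulliMeasure p hp α = Measure.pi (fun _ : α => (PMF.bernoulli p.toNNReal (by simpa using ENNReal.toNNReal_mono ENNReal.one_ne_top hp)).toMeasure) := by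
  have h : Fintype.ofFinite α = inst := Subsingleton.elim _ _
  rw [bernoulliMeasure, h]

lemma bern_true (p : ℝ≥0∞) (hp : p ≤ 1) :
    (PMF.bernoulli p.toNNReal (by simpa using ENNReal.toNNReal_mono ENNReal.one_ne_top hp)).toMeasure {true} = p := by
  rw [PMF.toMeasure_apply_singleton _ _ (measurableSet_singleton _)]
  refine (PMF.bernoulli_apply _ _).trans ?_
  simp [ENNReal.coe_sub, ENNReal.coe_toNNReal (ne_top_of_le_ne_top ENNReal.one_ne_top hp)]

lemma bern_false (p : ℝ≥0∞) (hp : p ≤ 1) :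
    (PMF.bernoulli p.toNNReal (by simpa using ENNReal.toNNReal_mono ENNReal.one_ne_top hp)).toMeasure {false} = 1 - p := by
  rw [PMF.toMeasure_apply_singleton _ _ (measurableSet_singleton _)]
  refine (PMF.bernoulli_apply _ _).trans ?_
  simp [ENNReal.coe_sub, ENNReal.coe_toNNReal (ne_top_of_le_ne_top ENNReal.one_ne_top hp)]

lemma wnonneg (pr : ℝ) (h0 : 0 ≤ pr) (h1 : pr ≤ 1) {α : Type} [Fintype α] (ω : α → Bool) :
    0 ≤ ∏ x : α, (if ω x = true then pr else 1 - pr) :=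
  Finset.prod_nonneg fun x _ => by split_ifs <;> linarith

lemma toReal_le_one (p : ℝ≥0∞) (hp : p ≤ 1) : p.toReal ≤ 1 := by
  simpa using ENNReal.toReal_mono (by norm_num) hp

lemma bern_cyl (p : ℝ≥0∞) (hp : p ≤ 1) (α : Type) [Fintype α] (g : α → Set Bool) :
    bernoulliMeasure p hp α (Set.univ.pi g)
      = ∏ x : α, (PMF.bernoulli p.toNNReal (by simpa using ENNReal.toNNReal_mono ENNReal.one_ne_top hp)).toMeasure (g x) := by
  rw [bernoulliMeasure_eq_pi, Measure.pi_pi]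

lemma meas_singleton (p : ℝ≥0∞) (hp : p ≤ 1) (α : Type) [Fintype α] (ω : α → Bool) :
    bernoulliMeasure p hp α {ω}
      = ENNReal.ofReal (∏ x : α, (if ω x = true then p.toReal else 1 - p.toReal)) := by
  have hp' : p ≠ ⊤ := (lt_of_le_of_lt hp (by norm_num)).ne
  have h1 : ({ω} : Set (α → Bool)) = Set.univ.pi (fun x => {ω x}) :=
    (Set.univ_pi_singleton ω).symm
  rw [h1, bern_cyl]
  rw [ENNReal.ofReal_prod_of_nonneg]
  · apply Finset.prod_congr rfl
    intro x _
    cases hx : ω x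
    · simp only [hx, Bool.false_eq_true, if_false]
      rw [bern_false p hp, ← ENNReal.ofReal_toReal (a := 1 - p) (by simp),
        ENNReal.toReal_sub_of_le hp (by norm_num)]
      simp
    · simp only [hx, if_true]
      rw [bern_true p hp, ENNReal.ofReal_toReal hp']
  · intro x _
    have := toReal_le_one p hp
    split_ifs
    · exact ENNReal.toReal_nonneg
    · linarith

lemma meas_set (p : ℝ≥0∞) (hp : p ≤ 1) (α : Type) [Fintype α] [DecidableEq α]
    (A : Set (α → Bool)) [DecidablePred (· ∈ A)] :
    bernoulliMeasure p hp α A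
      = ENNReal.ofReal (∑ ω ∈ Finset.univ.filter (· ∈ A),
          ∏ x : α, (if ω x = true then p.toReal else 1 - p.toReal)) := by
  have hA : A = ⋃ ω ∈ Finset.univ.filter (· ∈ A), ({ω} : Set (α → Bool)) := by
    ext ω; simp
  rw [congrArg (bernoulliMeasure p hp α) hA, measure_biUnion_finset]
  · rw [ENNReal.ofReal_sum_of_nonneg]
    · exact Finset.sum_congr rfl fun ω _ => meas_singleton p hp α ω
    · exact fun ω _ => wnonneg _ ENNReal.toReal_nonneg (toReal_le_one p hp) ω
  · intro ω _ ω' _ hne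
    simp [Function.onFun, Set.disjoint_singleton, hne]
  · intro ω _
    have : ({ω} : Set (α → Bool)) = Set.univ.pi (fun x => {ω x}) :=
      (Set.univ_pi_singleton ω).symm
    rw [this]
    exact MeasurableSet.univ_pi fun x => measurableSet_singleton _

lemma meas_allfalse (p : ℝ≥0∞) (hp : p ≤ 1) (α : Type) [Fintype α]
    (T : Set α) [DecidablePred (· ∈ T)] :
    bernoulliMeasure p hp α {ω | ∀ x ∈ T, ω x = false}
      = (1 - p) ^ (Nat.card T) := by
  have h1 : {ω : α → Bool | ∀ x ∈ T, ω x = false}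
      = Set.univ.pi (fun x => if x ∈ T then ({false} : Set Bool) else Set.univ) := by
    ext ω
    simp only [Set.mem_setOf_eq, Set.mem_univ_pi]
    constructor
    · intro h x
      by_cases hx : x ∈ T <;> simp [hx, h]
    · intro h x hx
      have := h x
      simpa [hx] using this
  rw [h1, bern_cyl]
  have h2 : ∀ x : α, (PMF.bernoulli p.toNNReal (by simpa using ENNReal.toNNReal_mono ENNReal.one_ne_top hp)).toMeasure
      (if x ∈ T then ({false} : Set Bool) else Set.univ)
      = (if x ∈ T then 1 - p else 1) := by
    intro x
    split_ifs
    · exact bern_false p hp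
    · exact measure_univ
  rw [Finset.prod_congr rfl (fun x _ => h2 x), Finset.prod_ite, Finset.prod_const,
    Finset.prod_const_one, mul_one]
  congr 1
  rw [Nat.card_eq_fintype_card, Fintype.card_subtype]


lemma chernoff_sum {α : Type} [Fintype α] [DecidableEq α] (S : Finset α) (pr θ : ℝ)
    (h0 : 0 ≤ pr) (h1 : pr ≤ 1) :
    ∑ ω ∈ Finset.univ.filter
        (fun ω : α → Bool => ((S.filter (fun x => ω x = true)).card : ℝ) < θ),
      ∏ x : α, (if ω x = true then pr else 1 - pr)
    ≤ Real.exp (θ * Real.log 2 - pr * S.card / 2) := by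
  set f : α → Bool → ℝ := fun x b =>
    (if b = true then pr else 1 - pr) * (if x ∈ S ∧ b = true then 1/2 else 1) with hf
  have hf_nonneg : ∀ x b, 0 ≤ f x b := by
    intro x b
    apply mul_nonneg
    · split_ifs <;> linarith
    · split_ifs <;> norm_num
  have key : ∀ ω : α → Bool,
      ∏ x : α, (if ω x = true then pr else 1 - pr)
        = (2:ℝ) ^ (((S.filter (fun x => ω x = true)).card : ℝ)) * ∏ x : α, f x (ω x) := by
    intro ω
    have hsplit : ∏ x : α, f x (ω x)
        = (∏ x : α, (if ω x = true then pr else 1 - pr))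
          * ∏ x : α, (if x ∈ S ∧ ω x = true then (1/2 : ℝ) else 1) := by
      rw [← Finset.prod_mul_distrib]
    have hcount : ∏ x : α, (if x ∈ S ∧ ω x = true then (1/2 : ℝ) else 1)
        = (1/2 : ℝ) ^ ((S.filter (fun x => ω x = true)).card) := by
      rw [Finset.prod_ite, Finset.prod_const, Finset.prod_const_one, mul_one]
      congr 1
      congr 1
      ext x
      simp
    rw [hsplit, hcount, Real.rpow_natCast]
    rw [mul_comm ((2:ℝ) ^ _), mul_assoc, ← mul_pow]
    norm_num
  calc ∑ ω ∈ Finset.univ.filter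
        (fun ω : α → Bool => ((S.filter (fun x => ω x = true)).card : ℝ) < θ),
      ∏ x : α, (if ω x = true then pr else 1 - pr)
      ≤ ∑ ω ∈ Finset.univ.filter
          (fun ω : α → Bool => ((S.filter (fun x => ω x = true)).card : ℝ) < θ),
        (2:ℝ) ^ θ * ∏ x : α, f x (ω x) := by
        apply Finset.sum_le_sum
        intro ω hω
        rw [key ω]
        apply mul_le_mul_of_nonneg_right _ (Finset.prod_nonneg fun x _ => hf_nonneg x (ω x))
        apply Real.rpow_le_rpow_of_exponent_le one_le_two
        exact le_of_lt (Finset.mem_filter.1 hω).2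
    _ ≤ ∑ ω : α → Bool, (2:ℝ) ^ θ * ∏ x : α, f x (ω x) := by
        apply Finset.sum_le_sum_of_subset_of_nonneg (Finset.filter_subset _ _)
        intro ω _ _
        exact mul_nonneg (Real.rpow_nonneg (by norm_num) _)
          (Finset.prod_nonneg fun x _ => hf_nonneg x (ω x))
    _ = (2:ℝ) ^ θ * ∑ ω : α → Bool, ∏ x : α, f x (ω x) := by rw [← Finset.mul_sum]
    _ = (2:ℝ) ^ θ * ∏ x : α, (∑ b ∈ (Finset.univ : Finset Bool), f x b) := by
        rw [Finset.prod_univ_sum, Fintype.piFinset_univ]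
    _ = (2:ℝ) ^ θ * ∏ x : α, (f x true + f x false) := by
        congr 1
        exact Finset.prod_congr rfl fun x _ => by rw [Fintype.sum_bool]
    _ ≤ (2:ℝ) ^ θ * Real.exp (- pr * S.card / 2) := by
        apply mul_le_mul_of_nonneg_left _ (Real.rpow_nonneg (by norm_num) _)
        have hx : ∀ x : α, f x true + f x false = if x ∈ S then 1 - pr/2 else 1 := by
          intro x
          by_cases hxS : x ∈ S
          · simp only [hf, hxS, if_pos]; norm_num; ring
          · simp only [hf, hxS]; norm_num
        calc ∏ x : α, (f x true + f x false)
            = (1 - pr/2) ^ S.card := by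
              simp_rw [hx]
              rw [Finset.prod_ite, Finset.prod_const, Finset.prod_const_one, mul_one,
                Finset.filter_mem_eq_inter, Finset.univ_inter]
          _ ≤ Real.exp (-pr/2) ^ S.card := by
              apply pow_le_pow_left₀ (by linarith)
              linarith [Real.add_one_le_exp (-pr/2)]
          _ = Real.exp (- pr * S.card / 2) := by
              rw [← Real.exp_nat_mul]
              ring_nf
    _ = Real.exp (θ * Real.log 2 - pr * S.card / 2) := by
        rw [Real.rpow_def_of_pos (by norm_num : (0:ℝ) < 2), ← Real.exp_add]
        ring_nf

end Aux

/-- For a fixed rank-`d` flat `W` of `PG(n-1,q)`, the probability that `W` fails to be dense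
(i.e. fails to contain at least `(1/2)p(q^d-1)/(q-1)` points of `E_p` spanning rank `d`) is at
most `exp(-(1/8)p(q^d-1)/(q-1)) + q^d (1-p)^{q^{d-1}}`. -/
theorem dense_flat_failure (q n d : ℕ) (hq : 2 ≤ q) (hd : 1 ≤ d)
    (F : Type) [Field F] [Fintype F] (hcard : Fintype.card F = q)
    (p : ℝ≥0∞) (hp0 : 0 < p) (hp1 : p ≤ 1)
    (W : Submodule F (Fin n → F)) (hW : Module.finrank F W = d) :
    bernoulliMeasure p hp1 (PGPoint F n)
        {ω | ¬ ((1 / 2) * p.toReal * ((q : ℝ) ^ d - 1) / ((q : ℝ) - 1)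
                  ≤ (Nat.card {x : PGPoint F n // ω x = true ∧ x.rep ∈ W} : ℝ) ∧
                Module.finrank F (Submodule.span F
                  (Projectivization.rep '' {x : PGPoint F n | ω x = true ∧ x.rep ∈ W})) = d)}
      ≤ ENNReal.ofReal (Real.exp (-(1 / 8) * p.toReal * ((q : ℝ) ^ d - 1) / ((q : ℝ) - 1)))
          + (q : ℝ≥0∞) ^ d * (1 - p) ^ (q ^ (d - 1)) := by
  classical
  letI : Fintype (PGPoint F n) := Fintype.ofFinite _
  set μ := bernoulliMeasure p hp1 (PGPoint F n) with hμ
  set pr := p.toReal with hpr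
  set θ : ℝ := (1 / 2) * pr * ((q : ℝ) ^ d - 1) / ((q : ℝ) - 1) with hθ
  have hpr0 : 0 ≤ pr := ENNReal.toReal_nonneg
  have hpr1 : pr ≤ 1 := by simpa using ENNReal.toReal_mono (by norm_num) hp1
  have hq1R : (1 : ℝ) < q := by exact_mod_cast lt_of_lt_of_le one_lt_two (by exact_mod_cast hq)
  have hqd1 : (1 : ℕ) ≤ q ^ d := Nat.one_le_pow _ _ (by omega)
  -- the finset of points of the flat
  set S : Finset (PGPoint F n) := Finset.univ.filter (fun x => x.rep ∈ W) with hS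
  -- counting: |S| (q-1) = q^d - 1
  have hcardS : S.card * (q - 1) = q ^ d - 1 := by
    have h0 : ¬ ((0 : Fin n → F) ∈ W ∧ (0 : Fin n → F) ≠ 0) := fun h => h.2 rfl
    have hsc : ∀ (a : Fˣ) (v : Fin n → F), (a • v ∈ W ∧ a • v ≠ 0) ↔ (v ∈ W ∧ v ≠ 0) := by
      intro a v
      rw [Units.smul_def]
      constructor
      · rintro ⟨h1, h2⟩
        refine ⟨?_, fun hv => h2 (by rw [hv, smul_zero])⟩
        have := W.smul_mem ((a⁻¹ : Fˣ) : F) h1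
        rwa [smul_smul, Units.inv_mul, one_smul] at this
      · rintro ⟨h1, h2⟩
        exact ⟨W.smul_mem _ h1, fun hv => h2 (by
          have := smul_eq_zero.1 hv
          rcases this with h | h
          · exact absurd h (Units.ne_zero a)
          · exact h)⟩
    have hpc := proj_count (F := F) (fun v : Fin n → F => v ∈ W ∧ v ≠ 0) h0 hsc
    rw [card_nonzero_in W, hcard, hW] at hpc
    have hSc : Nat.card {x : PGPoint F n // x.rep ∈ W ∧ x.rep ≠ 0} = S.card := by
      rw [Nat.card_eq_fintype_card, Fintype.card_subtype]
      apply Finset.card_bij (fun x _ => x) <;> simp [hS, Projectivization.rep_nonzero]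
    rw [← hSc]
    exact hpc
  have hcardSR : (S.card : ℝ) = ((q:ℝ)^d - 1)/((q:ℝ)-1) := by
    have h := congrArg (Nat.cast : ℕ → ℝ) hcardS
    rw [Nat.cast_mul, Nat.cast_sub (by omega : 1 ≤ q), Nat.cast_sub hqd1] at h
    push_cast at h
    rw [eq_div_iff (by linarith : (q:ℝ)-1 ≠ 0)]
    exact h
  have hcount : ∀ ω : PGPoint F n → Bool,
      (Nat.card {x : PGPoint F n // ω x = true ∧ x.rep ∈ W})
        = (S.filter (fun x => ω x = true)).card := by
    intro ω
    rw [Nat.card_eq_fintype_card, Fintype.card_subtype, Finset.filter_filter]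
    congr 1
    apply Finset.filter_congr
    intro x _
    simp [and_comm]
  set A1 : Set (PGPoint F n → Bool) :=
    {ω | ((Nat.card {x : PGPoint F n // ω x = true ∧ x.rep ∈ W}) : ℝ) < θ} with hA1
  set A2 : Set (PGPoint F n → Bool) :=
    {ω | Module.finrank F (Submodule.span F
      (Projectivization.rep '' {x : PGPoint F n | ω x = true ∧ x.rep ∈ W})) ≠ d} with hA2
  have hsub : {ω : PGPoint F n → Bool |
      ¬ (θ ≤ (Nat.card {x : PGPoint F n // ω x = true ∧ x.rep ∈ W} : ℝ) ∧
          Module.finrank F (Submodule.span F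
            (Projectivization.rep '' {x : PGPoint F n | ω x = true ∧ x.rep ∈ W})) = d)}
        ⊆ A1 ∪ A2 := by
    intro ω hω
    simp only [Set.mem_setOf_eq, not_and_or, not_le] at hω
    exact hω
  have hbound1 : μ A1 ≤ ENNReal.ofReal
      (Real.exp (-(1 / 8) * pr * ((q : ℝ) ^ d - 1) / ((q : ℝ) - 1))) := by
    rw [hμ, meas_set p hp1]
    apply ENNReal.ofReal_le_ofReal
    have hfilt : Finset.univ.filter (· ∈ A1)
        = Finset.univ.filter
            (fun ω : PGPoint F n → Bool =>
              ((S.filter (fun x => ω x = true)).card : ℝ) < θ) := by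
      apply Finset.filter_congr
      intro ω _
      rw [hA1]
      simp only [Set.mem_setOf_eq, hcount ω]
    rw [hfilt]
    refine (chernoff_sum S pr θ hpr0 hpr1).trans ?_
    apply Real.exp_le_exp.2
    have key : ∀ t : ℝ, 0 ≤ t → t/2 * Real.log 2 - t/2 ≤ -(t/8) := by
      intro t ht
      nlinarith [Real.log_two_lt_d9, ht]
    have hNr : (0:ℝ) ≤ pr * (((q:ℝ)^d - 1)/((q:ℝ)-1)) := by
      apply mul_nonneg hpr0
      apply div_nonneg _ (by linarith)
      have : (1:ℝ) ≤ (q:ℝ)^d := one_le_pow₀ (le_of_lt hq1R)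
      linarith
    have h2 : θ * Real.log 2 - pr * (S.card:ℝ)/2
        = (pr * (((q:ℝ)^d - 1)/((q:ℝ)-1)))/2 * Real.log 2
          - (pr * (((q:ℝ)^d - 1)/((q:ℝ)-1)))/2 := by
      rw [hcardSR, hθ]; ring
    have h3 : -(1/8) * pr * ((q:ℝ)^d - 1) / ((q:ℝ)-1)
        = -((pr * (((q:ℝ)^d - 1)/((q:ℝ)-1)))/8) := by ring
    rw [h2, h3]
    exact key _ hNr
  have hbound2 : μ A2 ≤ (q : ℝ≥0∞) ^ d * (1 - p) ^ (q ^ (d - 1)) := by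
    haveI : Finite (Module.Dual F ↥W) :=
      Finite.of_injective (fun φ => (φ : ↥W → F)) DFunLike.coe_injective
    letI : Fintype (Module.Dual F ↥W) := Fintype.ofFinite _
    set T : {φ : Module.Dual F ↥W // φ ≠ 0} → Set (PGPoint F n) := fun φ =>
      {x : PGPoint F n | ∃ h : x.rep ∈ W, φ.1 ⟨x.rep, h⟩ ≠ 0} with hT
    set C : {φ : Module.Dual F ↥W // φ ≠ 0} → Set (PGPoint F n → Bool) := fun φ =>
      {ω | ∀ x ∈ T φ, ω x = false} with hC
    have hsub2 : A2 ⊆ ⋃ φ, C φ := by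
      intro ω hω
      rw [hA2, Set.mem_setOf_eq] at hω
      set U := Submodule.span F
        (Projectivization.rep '' {x : PGPoint F n | ω x = true ∧ x.rep ∈ W}) with hU
      have hUW : U ≤ W := Submodule.span_le.2 (by rintro _ ⟨x, hx, rfl⟩; exact hx.2)
      set U' : Submodule F ↥W := U.comap W.subtype with hU'
      have hU'top : U' ≠ ⊤ := by
        intro htop
        apply hω
        have hWU : W ≤ U := by
          intro w hw
          have h1 : (⟨w, hw⟩ : ↥W) ∈ U' := htop ▸ Submodule.mem_top
          exact h1
        have hUeq : U = W := le_antisymm hUW hWU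
        rw [hUeq]
        exact hW
      obtain ⟨φ, hφ0, hφb⟩ :=
        Submodule.exists_dual_map_eq_bot_of_lt_top (lt_top_iff_ne_top.2 hU'top) inferInstance
      refine Set.mem_iUnion.2 ⟨⟨φ, hφ0⟩, ?_⟩
      intro x hx
      rcases hx with ⟨hxW, hφx⟩
      by_contra hωx
      have hωx' : ω x = true := by
        cases h : ω x
        · exact absurd h hωx
        · rfl
      have hxU : x.rep ∈ U := Submodule.subset_span ⟨x, ⟨hωx', hxW⟩, rfl⟩
      have hxU' : (⟨x.rep, hxW⟩ : ↥W) ∈ U' := hxU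
      have hmem : φ ⟨x.rep, hxW⟩ ∈ U'.map φ := Submodule.mem_map_of_mem hxU'
      rw [hφb] at hmem
      exact hφx ((Submodule.mem_bot F).1 hmem)
    have hTcard : ∀ φ : {φ : Module.Dual F ↥W // φ ≠ 0},
        Nat.card (T φ) = q ^ (d - 1) := by
      intro φ
      have hP0 : ¬ ∃ h : (0 : Fin n → F) ∈ W, φ.1 ⟨0, h⟩ ≠ 0 := by
        rintro ⟨h, hne⟩
        exact hne (by rw [show (⟨(0 : Fin n → F), h⟩ : ↥W) = 0 from rfl, map_zero])
      have hPsc : ∀ (a : Fˣ) (v : Fin n → F),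
          (∃ h : a • v ∈ W, φ.1 ⟨a • v, h⟩ ≠ 0) ↔ (∃ h : v ∈ W, φ.1 ⟨v, h⟩ ≠ 0) := by
        intro a v
        constructor
        · rintro ⟨h, hne⟩
          have hv : v ∈ W := by
            have h2 := W.smul_mem ((a⁻¹ : Fˣ) : F) h
            rw [Units.smul_def, smul_smul, Units.inv_mul, one_smul] at h2
            exact h2
          refine ⟨hv, fun h0 => hne ?_⟩
          have heq : (⟨a • v, h⟩ : ↥W) = (a : F) • (⟨v, hv⟩ : ↥W) := by
            ext
            simp [Units.smul_def]
          rw [heq, _root_.map_smul, h0, smul_zero]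
        · rintro ⟨hv, hne⟩
          have h : a • v ∈ W := by
            rw [Units.smul_def]
            exact W.smul_mem _ hv
          refine ⟨h, fun h0 => hne ?_⟩
          have heq : (⟨a • v, h⟩ : ↥W) = (a : F) • (⟨v, hv⟩ : ↥W) := by
            ext
            simp [Units.smul_def]
          rw [heq, _root_.map_smul, smul_eq_zero] at h0
          rcases h0 with h0 | h0
          · exact absurd h0 (Units.ne_zero a)
          · exact h0
      have hpc := proj_count (F := F)
        (fun v : Fin n → F => ∃ h : v ∈ W, φ.1 ⟨v, h⟩ ≠ 0) hP0 hPsc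
      rw [card_dual_ne_zero W φ.1 φ.2, hcard, hW] at hpc
      have hqq : q ^ d - q ^ (d-1) = q ^ (d-1) * (q - 1) := by
        have h2 : q ^ d = q ^ (d-1) * q := by
          conv_lhs => rw [show d = (d-1)+1 by omega]
          rw [pow_succ]
        have h3 : q ^ (d-1) ≤ q ^ d := Nat.pow_le_pow_right (by omega) (by omega)
        zify [h3, (by omega : 1 ≤ q)]
        have h2' : (q:ℤ)^d = (q:ℤ)^(d-1) * q := by exact_mod_cast h2
        rw [h2']
        ring
      rw [hqq] at hpc
      exact Nat.eq_of_mul_eq_mul_right (by omega : 0 < q - 1) hpc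
    calc μ A2 ≤ ∑' φ, μ (C φ) := (measure_mono hsub2).trans (measure_iUnion_le _)
      _ = ∑' φ : {φ : Module.Dual F ↥W // φ ≠ 0}, (1 - p) ^ (q ^ (d-1)) := by
          apply tsum_congr
          intro φ
          rw [hμ, hC]
          rw [meas_allfalse p hp1 _ (T φ), hTcard φ]
      _ = (Fintype.card {φ : Module.Dual F ↥W // φ ≠ 0} : ℝ≥0∞) * (1 - p) ^ (q ^ (d-1)) := by
          rw [tsum_fintype, Finset.sum_const, Finset.card_univ, nsmul_eq_mul]
      _ ≤ (q : ℝ≥0∞) ^ d * (1 - p) ^ (q ^ (d - 1)) := by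
          apply mul_le_mul_left
          have h1 : Fintype.card {φ : Module.Dual F ↥W // φ ≠ 0}
              ≤ Fintype.card (Module.Dual F ↥W) := Fintype.card_subtype_le _
          have h2 : Fintype.card (Module.Dual F ↥W) = q ^ d := by
            rw [Module.card_eq_pow_finrank (K := F) (V := Module.Dual F ↥W),
              Subspace.dual_finrank_eq, hW, hcard]
          calc (Fintype.card {φ : Module.Dual F ↥W // φ ≠ 0} : ℝ≥0∞)
              ≤ ((q ^ d : ℕ) : ℝ≥0∞) := by exact_mod_cast h1.trans h2.le
            _ = (q : ℝ≥0∞) ^ d := by push_cast; rfl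
  refine le_trans (le_trans (measure_mono hsub) (measure_union_le _ _)) ?_
  exact add_le_add hbound1 hbound2
end

section
/- Let q ≥ 2, and let d, n, ℓ, k, c be such that ℓ ≤ n, ck ≤ c(1+δ)p·q^n/((q-1)n), and n·q^{-d²} > c²(1+δ)²p²/(q-1)². Then ℓ·(ck choose 2)·(q^n choose d-2) < (1/2)·q^{nd - d²} ≤ (1/2)·[n choose d]_q. -/
open MeasureTheory Set Filter
open scoped ENNReal NNReal Matroid Topology

/-- The chain of inequalities yielding the contradiction: if `ℓ ≤ n`, the class size bound `m`
satisfies `m ≤ c(1+δ)p qⁿ/((q-1)n)`, and `n q^{-d²} > c²(1+δ)²p²/(q-1)²`, then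
`ℓ·(m choose 2)·(qⁿ choose (d-2)) < (1/2) q^{nd-d²} ≤ (1/2)·[n choose d]_q`. -/
theorem contradiction_chain (q n d ℓ m : ℕ) (c δ p : ℝ) (hq : 2 ≤ q) (hn : 1 ≤ n)
    (hd2 : 2 ≤ d) (hdn : d ≤ n) (hl : ℓ ≤ n)
    (hm : (m : ℝ) ≤ c * (1 + δ) * p * (q : ℝ) ^ n / (((q : ℝ) - 1) * n))
    (hbig : c ^ 2 * (1 + δ) ^ 2 * p ^ 2 / ((q : ℝ) - 1) ^ 2 < (n : ℝ) / (q : ℝ) ^ (d ^ 2)) :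
    (ℓ : ℝ) * (Nat.choose m 2 : ℝ) * (Nat.choose (q ^ n) (d - 2) : ℝ)
        < (1 / 2) * (q : ℝ) ^ (n * d - d ^ 2) ∧
    (1 / 2) * (q : ℝ) ^ (n * d - d ^ 2) ≤ (1 / 2) * gaussBinom (q : ℝ) n d := by
  have hQ1 : (1:ℝ) < (q:ℝ) := by exact_mod_cast Nat.lt_of_lt_of_le one_lt_two hq
  have hQ0 : (0:ℝ) < (q:ℝ) := by linarith
  have hQne : (q:ℝ) ≠ 0 := ne_of_gt hQ0
  set Q : ℝ := (q:ℝ) with hQdef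
  have hN0 : (0:ℝ) < (n:ℝ) := by exact_mod_cast hn
  have hq1 : (0:ℝ) < Q - 1 := by linarith
  have hd2le : d ^ 2 ≤ n * d := by
    have := Nat.mul_le_mul_right d hdn
    simpa [pow_two] using this
  constructor
  · -- first inequality
    have hA0 : (0:ℝ) ≤ c * (1 + δ) * p * Q ^ n / ((Q - 1) * n) :=
      le_trans (Nat.cast_nonneg m) hm
    set A : ℝ := c * (1 + δ) * p * Q ^ n / ((Q - 1) * n) with hAdef
    -- bound the binomials
    have hch2 : (Nat.choose m 2 : ℝ) ≤ (m:ℝ) ^ 2 / 2 := by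
      have h1 : Nat.choose m 2 * 2 ≤ m ^ 2 := by
        rw [Nat.choose_two_right]
        calc m * (m - 1) / 2 * 2 ≤ m * (m - 1) := Nat.div_mul_le_self _ _
          _ ≤ m ^ 2 := by nlinarith [Nat.sub_le m 1]
      have := (Nat.cast_le (α := ℝ)).mpr h1
      push_cast at this
      linarith
    have hchd : (Nat.choose (q ^ n) (d - 2) : ℝ) ≤ Q ^ (n * (d - 2)) := by
      have h1 := Nat.choose_le_pow (q ^ n) (d - 2)
      have := (Nat.cast_le (α := ℝ)).mpr h1
      push_cast at this
      rw [pow_mul]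
      exact this
    have hm2 : (m:ℝ) ^ 2 ≤ A ^ 2 := by nlinarith [Nat.cast_nonneg (α := ℝ) m]
    have hl' : (ℓ:ℝ) ≤ (n:ℝ) := by exact_mod_cast hl
    have hpowpos : ∀ k : ℕ, (0:ℝ) < Q ^ k := fun k => pow_pos hQ0 k
    have step1 : (ℓ : ℝ) * (Nat.choose m 2 : ℝ) * (Nat.choose (q ^ n) (d - 2) : ℝ)
        ≤ (n:ℝ) * (A ^ 2 / 2) * Q ^ (n * (d - 2)) := by
      have hc2nn : (0:ℝ) ≤ (Nat.choose m 2 : ℝ) := Nat.cast_nonneg _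
      have hlnn : (0:ℝ) ≤ (ℓ:ℝ) := Nat.cast_nonneg _
      have hb1 : (ℓ : ℝ) * (Nat.choose m 2 : ℝ) ≤ (n:ℝ) * (A ^ 2 / 2) := by
        have : (Nat.choose m 2 : ℝ) ≤ A ^ 2 / 2 := le_trans hch2 (by linarith)
        exact mul_le_mul hl' this hc2nn (le_of_lt hN0)
      have hb2 : (0:ℝ) ≤ (n:ℝ) * (A ^ 2 / 2) := by positivity
      exact mul_le_mul hb1 hchd (Nat.cast_nonneg _) hb2
    -- strict algebraic step
    have e1 : Q ^ (n * (d - 2)) * Q ^ (2 * n) = Q ^ (n * d) := by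
      rw [← pow_add]
      congr 1
      have : n * (d - 2) + 2 * n = n * ((d - 2) + 2) := by ring
      rw [this, Nat.sub_add_cancel hd2]
    have e2 : Q ^ (n * d - d ^ 2) * Q ^ (d ^ 2) = Q ^ (n * d) := by
      rw [← pow_add, Nat.sub_add_cancel hd2le]
    have hB : (c ^ 2 * (1 + δ) ^ 2 * p ^ 2 / (Q - 1) ^ 2) * Q ^ (d ^ 2) < (n:ℝ) :=
      (lt_div_iff₀ (hpowpos _)).mp hbig
    have hA2 : A ^ 2 = (c ^ 2 * (1 + δ) ^ 2 * p ^ 2 / (Q - 1) ^ 2) * (Q ^ n) ^ 2 / (n:ℝ) ^ 2 := by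
      rw [hAdef]
      field_simp
    have step2 : (n:ℝ) * (A ^ 2 / 2) * Q ^ (n * (d - 2)) < (1 / 2) * Q ^ (n * d - d ^ 2) := by
      set B : ℝ := c ^ 2 * (1 + δ) ^ 2 * p ^ 2 / (Q - 1) ^ 2 with hBdef
      have hBnn : 0 ≤ B := by positivity
      have h2n : (Q ^ n) ^ 2 = Q ^ (2 * n) := by rw [← pow_mul, mul_comm]
      have lhs_eq : (n:ℝ) * (A ^ 2 / 2) * Q ^ (n * (d - 2))
          = B * Q ^ (n * d) / (2 * (n:ℝ)) := by
        rw [hA2, ← e1, h2n]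
        field_simp
      rw [lhs_eq, div_lt_iff₀ (by positivity)]
      have key : B * Q ^ (d ^ 2) * Q ^ (n * d - d ^ 2) < (n:ℝ) * Q ^ (n * d - d ^ 2) :=
        mul_lt_mul_of_pos_right hB (hpowpos _)
      calc B * Q ^ (n * d) = B * Q ^ (d ^ 2) * Q ^ (n * d - d ^ 2) := by
            rw [mul_assoc, mul_comm (Q ^ (d^2)), e2]
        _ < (n:ℝ) * Q ^ (n * d - d ^ 2) := key
        _ ≤ 1 / 2 * Q ^ (n * d - d ^ 2) * (2 * (n:ℝ)) := le_of_eq (by ring)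
    exact lt_of_le_of_lt step1 step2
  · -- gaussBinom lower bound
    have h2 : Q ^ (n * d - d ^ 2) ≤ gaussBinom Q n d := by
      have e3 : n * d - d ^ 2 = (n - d) * d := by
        rw [Nat.sub_mul, pow_two]
      rw [e3, pow_mul, gaussBinom]
      have : (Q ^ (n - d)) ^ d = ∏ _j ∈ Finset.range d, Q ^ (n - d) := by
        rw [Finset.prod_const, Finset.card_range]
      rw [this]
      apply Finset.prod_le_prod
      · intro i _
        positivity
      · intro j hj
        have hjd : j < d := Finset.mem_range.mp hj
        have hden : (0:ℝ) < Q ^ (d - j) - 1 := by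
          have : (1:ℝ) < Q ^ (d - j) := by
            apply one_lt_pow₀ hQ1
            omega
          linarith
        rw [le_div_iff₀ hden]
        have epow : Q ^ (n - d) * Q ^ (d - j) = Q ^ (n - j) := by
          rw [← pow_add]
          congr 1
          omega
        have h1 : (1:ℝ) ≤ Q ^ (n - d) := one_le_pow₀ (le_of_lt hQ1)
        nlinarith [epow, h1]
    linarith
end

section
/- Every paving matroid of rank r ≥ 2 with colouring number k ∈ {2,3} and r sufficiently large (so that ⌈rk/(r-1)⌉ = k+1) admits a partition of its ground set into classes of size at most (3/2)·k such that every transversal is independent; i.e., it is (1, 3/2)-decomposable. -/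
open MeasureTheory Set Filter
open scoped ENNReal NNReal Matroid Topology

lemma paving_small_indep {α : Type*} (M : Matroid α) (r : ℕ)
    (hpaving : ∀ C : Set α, C ⊆ M.E → M.Dep C → (∀ x ∈ C, M.Indep (C \ {x})) → r ≤ C.ncard)
    (S : Set α) (hSE : S ⊆ M.E) (hSfin : S.Finite) (hScard : S.ncard < r) : M.Indep S := by
  by_contra hdep
  have hSdep : M.Dep S := Matroid.dep_iff.2 ⟨hdep, hSE⟩
  set T : Set ℕ := {n | ∃ C ⊆ S, M.Dep C ∧ C.ncard = n} with hT
  have hne : T.Nonempty := ⟨S.ncard, S, subset_rfl, hSdep, rfl⟩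
  obtain ⟨C, hCS, hCdep, hCcard⟩ := Nat.sInf_mem hne
  have hCfin : C.Finite := hSfin.subset hCS
  have hCne : C.Nonempty := hCdep.nonempty
  have hCpos : 0 < C.ncard := (Set.ncard_pos hCfin).2 hCne
  have hmin : ∀ x ∈ C, M.Indep (C \ {x}) := by
    intro x hx
    by_contra h'
    have hd : M.Dep (C \ {x}) := Matroid.dep_iff.2 ⟨h', diff_subset.trans (hCS.trans hSE)⟩
    have hle : sInf T ≤ (C \ {x}).ncard :=
      Nat.sInf_le ⟨C \ {x}, diff_subset.trans hCS, hd, rfl⟩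
    have hlt : (C \ {x}).ncard < C.ncard := by
      rw [Set.ncard_diff_singleton_of_mem hx]; omega
    omega
  have h1 := hpaving C (hCS.trans hSE) hCdep hmin
  have h2 : C.ncard ≤ S.ncard := Set.ncard_le_ncard hCS hSfin
  omega

lemma indep_ncard_le_rankOf {α : Type*} (M : Matroid α) (hfin : M.E.Finite)
    (I : Set α) (hI : M.Indep I) : I.ncard ≤ M.rankOf M.E := by
  have hIE : I ⊆ M.E := hI.subset_ground
  have hbdd : BddAbove {k | ∃ I ⊆ M.E, M.Indep I ∧ I.ncard = k} := by
    refine ⟨M.E.ncard, ?_⟩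
    rintro n ⟨J, hJE, _, rfl⟩
    exact Set.ncard_le_ncard hJE hfin
  exact le_csSup hbdd ⟨I, hIE, hI, rfl⟩

lemma ground_ncard_le {α : Type*} (M : Matroid α) (hfin : M.E.Finite) (k r : ℕ)
    (hcol : M.Colorable k) (hile : ∀ I, M.Indep I → I.ncard ≤ r) :
    M.E.ncard ≤ k * r := by
  classical
  obtain ⟨f, hf1, hf2⟩ := hcol
  set s := hfin.toFinset with hs
  have hsub : s ⊆ (Finset.range k).biUnion (fun i => s.filter (fun x => f x = i)) := by
    intro x hx
    have hxE : x ∈ M.E := hfin.mem_toFinset.1 hx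
    exact Finset.mem_biUnion.2 ⟨f x, Finset.mem_range.2 (hf1 x hxE), Finset.mem_filter.2 ⟨hx, rfl⟩⟩
  have hfiltcard : ∀ i, (s.filter (fun x => f x = i)).card ≤ r := by
    intro i
    have hcoe : (↑(s.filter (fun x => f x = i)) : Set α) = {x ∈ M.E | f x = i} := by
      ext x; simp [hs]
    have := hile _ (hf2 i)
    rw [← hcoe, Set.ncard_coe_finset] at this
    exact this
  calc M.E.ncard = s.card := by rw [Set.ncard_eq_toFinset_card _ hfin]
    _ ≤ ((Finset.range k).biUnion (fun i => s.filter (fun x => f x = i))).card :=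
        Finset.card_le_card hsub
    _ ≤ ∑ i ∈ Finset.range k, (s.filter (fun x => f x = i)).card := Finset.card_biUnion_le
    _ ≤ ∑ _i ∈ Finset.range k, r := Finset.sum_le_sum (fun i _ => hfiltcard i)
    _ = k * r := by simp [Finset.sum_const, mul_comm]

/-- A paving matroid of rank `r ≥ 2` with colouring number `k ∈ {2,3}` and `r` large enough that
`⌈rk/(r-1)⌉ = k + 1` admits a partition of its ground set into classes of size at most `(3/2)k`
every transversal of which is independent; i.e. it is `(1, 3/2)`-decomposable. -/
theorem paving_decomposable {α : Type*} (M : Matroid α) (r k : ℕ) (hfin : M.E.Finite)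
    (hr : 2 ≤ r) (hrank : M.rankOf M.E = r)
    (hpaving : ∀ C : Set α, C ⊆ M.E → M.Dep C → (∀ x ∈ C, M.Indep (C \ {x})) → r ≤ C.ncard)
    (hk : M.colNumber = k) (hk23 : k = 2 ∨ k = 3)
    (hceil : ⌈((r : ℝ) * k) / ((r : ℝ) - 1)⌉ = (k : ℤ) + 1) :
    ∃ (ℓ : ℕ) (Es : Fin ℓ → Set α),
      (∀ i, (Es i).Nonempty) ∧ Set.univ.PairwiseDisjoint Es ∧ (⋃ i, Es i) = M.E ∧
      (∀ i, (Es i).Finite ∧ ((Es i).ncard : ℝ) ≤ (3 / 2) * k) ∧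
      ∀ y : Fin ℓ → α, (∀ i, y i ∈ Es i) → M.Indep (Set.range y) := by
  classical
  -- trivial case: empty ground set
  by_cases hE : M.E = ∅
  · refine ⟨0, fun i => ∅, fun i => i.elim0, fun i _ => i.elim0, by simp [hE],
      fun i => i.elim0, fun y _ => ?_⟩
    rw [Set.range_eq_empty]
    exact M.empty_indep
  -- k+1 ≤ r from the ceiling hypothesis
  have hk0 : 0 < k := by omega
  have hrpos : (0 : ℝ) < (r : ℝ) - 1 := by
    have : (2 : ℝ) ≤ (r : ℝ) := by exact_mod_cast hr
    linarith
  have hkr : k + 1 ≤ r := by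
    have h1 : ((r : ℝ) * k) / ((r : ℝ) - 1) ≤ ((k : ℝ) + 1) := by
      have := Int.le_ceil (((r : ℝ) * k) / ((r : ℝ) - 1))
      rw [hceil] at this
      push_cast at this
      exact this
    have h2 : (r : ℝ) * k ≤ ((k : ℝ) + 1) * ((r : ℝ) - 1) := by
      rw [div_le_iff₀ hrpos] at h1
      exact h1
    have h3 : (k : ℝ) + 1 ≤ (r : ℝ) := by nlinarith
    exact_mod_cast h3
  -- the colouring gives |E| ≤ k * r
  have hcol : M.Colorable k := by
    have hne : {j | M.Colorable j}.Nonempty := by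
      by_contra h
      rw [Set.not_nonempty_iff_eq_empty] at h
      rw [Matroid.colNumber, h, Nat.sInf_empty] at hk
      omega
    have := Nat.sInf_mem hne
    rwa [← Matroid.colNumber, hk] at this
  have hEcard : M.E.ncard ≤ k * r :=
    ground_ncard_le M hfin k r hcol
      (fun I hI => hrank ▸ indep_ncard_le_rankOf M hfin I hI)
  -- set up sizes
  set n := M.E.ncard with hn
  have hnpos : 0 < n := (Set.ncard_pos hfin).2 (Set.nonempty_iff_ne_empty.2 hE)
  set m := k + 1 with hm
  have hmpos : 0 < m := by omega
  have hnm : n ≤ m * (r - 1) := by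
    have : k * r ≤ m * (r - 1) := by
      rcases hk23 with rfl | rfl
      · obtain ⟨d, rfl⟩ : ∃ d, r = 3 + d := ⟨r - 3, by omega⟩
        simp [hm]; ring_nf; omega
      · obtain ⟨d, rfl⟩ : ∃ d, r = 4 + d := ⟨r - 4, by omega⟩
        simp [hm]; ring_nf; omega
    omega
  set ℓ := (n - 1) / m + 1 with hℓ
  have hℓr : ℓ ≤ r - 1 := by
    have : (n - 1) / m < r - 1 := by
      rw [Nat.div_lt_iff_lt_mul hmpos]
      calc n - 1 < n := by omega
        _ ≤ m * (r - 1) := hnm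
        _ = (r - 1) * m := mul_comm _ _
    omega
  have hjl : ∀ j : ℕ, j < n → j / m < ℓ := by
    intro j hj
    have h1 : j / m ≤ (n - 1) / m := Nat.div_le_div_right (by omega)
    omega
  have him : ∀ i : ℕ, i < ℓ → i * m < n := by
    intro i hi
    have h1 : i ≤ (n - 1) / m := by omega
    have h2 : i * m ≤ n - 1 := (Nat.le_div_iff_mul_le hmpos).1 h1
    omega
  -- enumerate the ground set
  obtain ⟨g, hginj, hgrange⟩ : ∃ g : Fin n → α, Function.Injective g ∧ Set.range g = M.E := by
    have hcard : hfin.toFinset.card = n := by rw [hn, Set.ncard_eq_toFinset_card _ hfin]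
    set e := hfin.toFinset.equivFin with he
    refine ⟨fun j => (e.symm (Fin.cast hcard.symm j) : α), ?_, ?_⟩
    · intro a b hab
      have h1 : e.symm (Fin.cast hcard.symm a) = e.symm (Fin.cast hcard.symm b) :=
        Subtype.ext hab
      have h2 := e.symm.injective h1
      exact Fin.ext (by simpa using congrArg Fin.val h2)
    · ext x
      constructor
      · rintro ⟨j, rfl⟩
        exact hfin.mem_toFinset.1 (e.symm (Fin.cast hcard.symm j)).2
      · intro hx
        refine ⟨Fin.cast hcard (e ⟨x, hfin.mem_toFinset.2 hx⟩), ?_⟩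
        exact congrArg Subtype.val (e.symm_apply_apply ⟨x, hfin.mem_toFinset.2 hx⟩)
  -- define the partition
  refine ⟨ℓ, fun i => g '' {j : Fin n | (j : ℕ) / m = (i : ℕ)}, ?_, ?_, ?_, ?_, ?_⟩
  · -- nonempty
    intro i
    refine ⟨g ⟨(i : ℕ) * m, him i i.2⟩, ⟨⟨(i : ℕ) * m, him i i.2⟩, ?_, rfl⟩⟩
    simp [Nat.mul_div_cancel _ hmpos]
  · -- pairwise disjoint
    intro i _ j _ hij
    simp only [Function.onFun]
    rw [Set.disjoint_left]
    rintro a ⟨j1, hj1, rfl⟩ ⟨j2, hj2, hj2e⟩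
    have := hginj hj2e.symm
    subst this
    exact hij (Fin.ext (by rw [← hj1, ← hj2]))
  · -- union
    ext x
    simp only [Set.mem_iUnion]
    constructor
    · rintro ⟨i, j, _, rfl⟩
      rw [← hgrange]; exact ⟨j, rfl⟩
    · intro hx
      rw [← hgrange] at hx
      obtain ⟨j, rfl⟩ := hx
      exact ⟨⟨(j : ℕ) / m, hjl j j.2⟩, j, rfl, rfl⟩
  · -- class sizes
    intro i
    constructor
    · exact (Set.toFinite _).image g
    · have hT : {j : Fin n | (j : ℕ) / m = (i : ℕ)} =
          ↑(Finset.univ.filter (fun j : Fin n => (j : ℕ) / m = (i : ℕ))) := by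
        ext j; simp
      have hcard : ({j : Fin n | (j : ℕ) / m = (i : ℕ)}).ncard ≤ m := by
        rw [hT, Set.ncard_coe_finset]
        have := Finset.card_le_card_of_injOn
          (s := Finset.univ.filter (fun j : Fin n => (j : ℕ) / m = (i : ℕ)))
          (f := fun j : Fin n => (j : ℕ) % m)
          (t := Finset.range m)
          (fun a _ => Finset.mem_range.2 (Nat.mod_lt _ hmpos))
          (by
            intro a ha b hb hab
            simp only [Finset.mem_coe, Finset.mem_filter, Finset.coe_filter, Set.mem_setOf_eq, Finset.mem_univ, true_and] at ha hb
            have hab' : (a : ℕ) % m = (b : ℕ) % m := hab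
            have hdiv : (a : ℕ) / m = (b : ℕ) / m := by rw [ha, hb]
            exact Fin.ext
              (by rw [← Nat.div_add_mod (a : ℕ) m, ← Nat.div_add_mod (b : ℕ) m, hdiv, hab']))
        simpa using this
      have : (g '' {j : Fin n | (j : ℕ) / m = (i : ℕ)}).ncard ≤ m := by
        rw [Set.ncard_image_of_injective _ hginj]; exact hcard
      have hmk : (m : ℝ) ≤ (3 / 2) * k := by
        rcases hk23 with rfl | rfl <;> norm_num [hm]
      calc ((g '' {j : Fin n | (j : ℕ) / m = (i : ℕ)}).ncard : ℝ) ≤ (m : ℝ) := by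
            exact_mod_cast this
        _ ≤ (3 / 2) * k := hmk
  · -- transversals are independent
    intro y hy
    have hsub : Set.range y ⊆ M.E := by
      rintro x ⟨i, rfl⟩
      obtain ⟨j, _, hj⟩ := hy i
      rw [← hgrange, ← hj]; exact ⟨j, rfl⟩
    have hcard : (Set.range y).ncard ≤ ℓ := by
      rw [← Set.image_univ]
      calc (y '' Set.univ).ncard ≤ (Set.univ : Set (Fin ℓ)).ncard :=
            Set.ncard_image_le (Set.finite_univ)
        _ = ℓ := by rw [Set.ncard_univ, Nat.card_eq_fintype_card, Fintype.card_fin]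
    exact paving_small_indep M r hpaving _ hsub (Set.finite_range y) (by omega)
end
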